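/- If r : ℝ → ℝⁿ (n ≥ 2) is a twice differentiable solution of the central force equation r'' = (F(|r|)/|r|) • r, and at some time t₀ the vectors r(t₀) and r'(t₀) are linearly independent, then for all t the vectors r(t) and r'(t) lie in the fixed 2-dimensional subspace spanned by r(t₀) and r'(t₀). -/

import Mathlib

open Set Submodule

/-- Planarity of central force motion: if `r(t₀)` and `v(t₀)` are linearly
independent, the motion stays in the 2-dimensional subspace they span. -/
theorem central_force_motion_planar {n : ℕ} (hn : 2 ≤ n)
    (F : ℝ → ℝ) (hF : Continuous F)
    (r v : ℝ → EuclideanSpace ℝ (Fin n))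
    (hr : ∀ t, HasDerivAt r (v t) t)
    (hv : ∀ t, HasDerivAt v ((F ‖r t‖ / ‖r t‖) • r t) t)
    (hpos : ∀ t, 0 < ‖r t‖)
    (t₀ : ℝ)
    (hli : LinearIndependent ℝ ![r t₀, v t₀]) :
    ∀ t, r t ∈ Submodule.span ℝ {r t₀, v t₀} ∧
         v t ∈ Submodule.span ℝ {r t₀, v t₀} := by
  let E := EuclideanSpace ℝ (Fin n)
  set W : Submodule ℝ E := Submodule.span ℝ {r t₀, v t₀} with hW
  haveI : FiniteDimensional ℝ W := by
    apply FiniteDimensional.finiteDimensional_submodule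
  set P : E →L[ℝ] E := W.subtypeL.comp (orthogonalProjection W) with hP
  have hPmem : ∀ x, P x ∈ W := fun x => (orthogonalProjection W x).2
  have hPid : ∀ x ∈ W, P x = x := fun x hx => by
    simp [hP, Submodule.starProjection_eq_self_iff.mpr hx]
  have hrc : Continuous r := by
    exact continuous_iff_continuousAt.mpr fun t => (hr t).continuousAt
  set f : ℝ → ℝ := fun t => F ‖r t‖ / ‖r t‖ with hf
  have hfc : Continuous f :=
    (hF.comp (continuous_norm.comp hrc)).div (continuous_norm.comp hrc)
      (fun t => (hpos t).ne')
  -- the "error" trajectory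
  set y : ℝ → E × E := fun t => (r t - P (r t), v t - P (v t)) with hy
  have hy0 : y t₀ = 0 := by
    have h1 : r t₀ ∈ W := Submodule.subset_span (by simp)
    have h2 : v t₀ ∈ W := Submodule.subset_span (by simp)
    simp [hy, hPid _ h1, hPid _ h2]
  have hyderiv : ∀ t, HasDerivAt y (v t - P (v t), f t • (r t - P (r t))) t := by
    intro t
    apply HasDerivAt.prodMk
    · exact (hr t).sub (P.hasFDerivAt.comp_hasDerivAt t (hr t))
    · have := (hv t).sub (P.hasFDerivAt.comp_hasDerivAt t (hv t))
      convert this using 1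
      · rfl
      rw [map_smul, smul_sub]
  -- key: y = 0 everywhere
  have hkey : ∀ t, y t = 0 := by
    intro t
    set a : ℝ := min t₀ t - 1
    set b : ℝ := max t₀ t + 1
    have hab : a ≤ b := by
      have := min_le_max (a := t₀) (b := t); simp only [a, b]; linarith
    have ht₀ : t₀ ∈ Ioo a b := by
      constructor
      · have := min_le_left t₀ t; simp only [a]; linarith
      · have := le_max_left t₀ t; simp only [b]; linarith
    have ht : t ∈ Ioo a b := by
      constructor
      · have := min_le_right t₀ t; simp only [a]; linarith
      · have := le_max_right t₀ t; simp only [b]; linarith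
    -- clamped coefficient
    set c : ℝ → ℝ := fun s => f (min (max s a) b) with hc
    have hcc : ∀ s ∈ Ioo a b, c s = f s := by
      intro s hs
      simp [hc, max_eq_left hs.1.le, min_eq_left hs.2.le]
    obtain ⟨C, hC⟩ := (isCompact_Icc (a := a) (b := b)).exists_bound_of_continuousOn
      hfc.continuousOn
    have hcb : ∀ s, |c s| ≤ C := by
      intro s
      have hmem : min (max s a) b ∈ Icc a b := by
        constructor
        · exact le_min (le_max_right s a) hab
        · exact min_le_right _ _
      simpa using hC _ hmem
    set K : NNReal := ⟨max 1 C, le_trans zero_le_one (le_max_left _ _)⟩ with hK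
    set V : ℝ → E × E → E × E := fun s p => (p.2, c s • p.1) with hV
    have hlip : ∀ s, LipschitzOnWith K (V s) univ := by
      intro s
      rw [lipschitzOnWith_univ]
      apply LipschitzWith.of_dist_le_mul
      intro p q
      have hKc : (K : ℝ) = max 1 C := rfl
      rw [hKc, Prod.dist_eq, Prod.dist_eq]
      simp only [hV]
      rw [dist_smul₀]
      have hd1 : (0:ℝ) ≤ dist p.1 q.1 := dist_nonneg
      have hd2 : (0:ℝ) ≤ dist p.2 q.2 := dist_nonneg
      have h1 : dist p.2 q.2 ≤ max 1 C * max (dist p.1 q.1) (dist p.2 q.2) := by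
        calc dist p.2 q.2 = 1 * dist p.2 q.2 := (one_mul _).symm
        _ ≤ max 1 C * max (dist p.1 q.1) (dist p.2 q.2) :=
          mul_le_mul (le_max_left _ _) (le_max_right _ _) hd2
            (le_trans zero_le_one (le_max_left _ _))
      have h2 : ‖c s‖ * dist p.1 q.1 ≤ max 1 C * max (dist p.1 q.1) (dist p.2 q.2) := by
        apply mul_le_mul _ (le_max_left _ _) hd1 (le_trans zero_le_one (le_max_left _ _))
        exact le_trans (by simpa using hcb s) (le_max_right _ _)
      exact max_le h1 h2
    have heq : EqOn y (fun _ => (0 : E × E)) (Ioo a b) := by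
      apply ODE_solution_unique_of_mem_Ioo (fun s _ => hlip s) ht₀ _ _ hy0
      · intro s hs
        refine ⟨?_, trivial⟩
        have := hyderiv s
        refine this.congr_deriv ?_
        simp [hV, hy, hcc s hs]
      · intro s hs
        refine ⟨?_, trivial⟩
        simp [hV]
        exact hasDerivAt_const s (0 : E × E)
    exact heq ht
  intro t
  have h := hkey t
  have h1 : r t - P (r t) = 0 := congrArg Prod.fst h
  have h2 : v t - P (v t) = 0 := congrArg Prod.snd h
  constructor
  · rw [show r t = P (r t) from by rwa [sub_eq_zero] at h1]; exact hPmem _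
  · rw [show v t = P (v t) from by rwa [sub_eq_zero] at h2]; exact hPmem _
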